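/- arXiv:1905.07887 — 2 statements merged into one kernel-verified Lean document; each statement's English description precedes it below -/
import Mathlib

section
/- Let H and K be holomorphic functions on a disk centered at 0, with H(0) = d > 0 real and K(0) = i. Suppose for all w in a punctured neighborhood of 0 the identity Im(H(w))·((Re K(w))² − |w|²(Im K(w))²) + 2·Re(H(w))·|w|·Re(K(w))·Im(K(w)) = 0 holds. Then Re(K(w)) = 0 and Im(H(w)) = 0 identically near 0. -/
open Metric Set



lemma aux_re_all (k : ℕ) (hk : k ≠ 0) (c : ℂ)
    (h : ∀ ζ : ℂ, ‖ζ‖ = 1 → (ζ ^ k * c).re = 0) : c = 0 := by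
  by_contra hc
  obtain ⟨ζ, hζk⟩ := IsAlgClosed.exists_pow_nat_eq ((starRingEnd ℂ) c / (‖c‖ : ℂ))
    (Nat.pos_of_ne_zero hk)
  have hcn : ‖c‖ ≠ 0 := norm_ne_zero_iff.mpr hc
  have hζnorm : ‖ζ‖ = 1 := by
    have h1 : ‖ζ‖ ^ k = 1 := by
      rw [← norm_pow, hζk, norm_div, RCLike.norm_conj, Complex.norm_real,
        Real.norm_eq_abs, _root_.abs_of_nonneg (norm_nonneg c)]
      exact div_self hcn
    rcases lt_trichotomy ‖ζ‖ 1 with hl | he | hg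
    · exact absurd h1 (by have := pow_lt_one₀ (norm_nonneg ζ) hl hk; linarith)
    · exact he
    · exact absurd h1 (by have := one_lt_pow₀ hg hk; linarith)
  have hval : ζ ^ k * c = ((Complex.normSq c / ‖c‖ : ℝ) : ℂ) := by
    rw [hζk]
    rw [div_mul_eq_mul_div, mul_comm ((starRingEnd ℂ) c) c, Complex.mul_conj]
    push_cast
    ring
  have h0 := h ζ hζnorm
  rw [hval] at h0
  simp only [Complex.ofReal_re] at h0
  field_simp at h0
  exact hc (by simpa using h0)

lemma aux_im_all (k : ℕ) (hk : k ≠ 0) (c : ℂ)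
    (h : ∀ ζ : ℂ, ‖ζ‖ = 1 → (ζ ^ k * c).im = 0) : c = 0 := by
  have := aux_re_all k hk (-Complex.I * c) (fun ζ hζ => by
    have h1 := h ζ hζ
    have : (ζ ^ k * (-Complex.I * c)) = -Complex.I * (ζ ^ k * c) := by ring
    rw [this]
    simp [Complex.mul_re, h1])
  have h3 : Complex.I * c = 0 := by linear_combination -this
  rcases mul_eq_zero.mp h3 with h' | h'
  · exact absurd h' Complex.I_ne_zero
  · exact h'

lemma aux_ray_zero {F : ℝ → ℝ} {L : ℝ}
    (h0 : ∀ᶠ ε in nhdsWithin (0:ℝ) (Ioi 0), F ε = 0)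
    (hlim : Filter.Tendsto F (nhdsWithin (0:ℝ) (Ioi 0)) (nhds L)) : L = 0 :=
  tendsto_nhds_unique hlim ((Filter.tendsto_congr' h0).mpr tendsto_const_nhds)


lemma aux_key (H K A B : ℂ → ℂ) (d' : ℝ) (n m p q1 q2 q3 : ℕ) (δ : ℝ) (hδ : 0 < δ)
    (hA : ContinuousAt A 0) (hB : ContinuousAt B 0)
    (hq1 : p + q1 = m + 2 * n) (hq2 : p + q2 = m + 2) (hq3 : p + q3 = n + 1)
    (h1q1 : 1 ≤ q1) (hn : 1 ≤ n) (hm : 1 ≤ m)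
    (hKf : ∀ᶠ w in nhds (0:ℂ), K w = Complex.I + w ^ n * A w)
    (hHf : ∀ᶠ w in nhds (0:ℂ), H w = (d' : ℂ) + w ^ m * B w)
    (hident : ∀ w : ℂ, 0 < ‖w‖ → ‖w‖ < δ →
      (H w).im * ((K w).re ^ 2 - ‖w‖ ^ 2 * (K w).im ^ 2) +
        2 * (H w).re * (‖w‖ * (K w).re * (K w).im) = 0)
    (ζ : ℂ) (hζ : ‖ζ‖ = 1) :
    (0:ℝ) ^ q2 * (ζ ^ m * B 0).im = 2 * d' * ((0:ℝ) ^ q3 * (ζ ^ n * A 0).re) := by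
  obtain ⟨r₁, hr₁, hK'⟩ := Metric.eventually_nhds_iff.mp hKf
  obtain ⟨r₂, hr₂, hH'⟩ := Metric.eventually_nhds_iff.mp hHf
  set RA : ℝ → ℝ := fun ε => (ζ ^ n * A ((ε:ℂ) * ζ)).re with hRA
  set IA : ℝ → ℝ := fun ε => (ζ ^ n * A ((ε:ℂ) * ζ)).im with hIA
  set RB : ℝ → ℝ := fun ε => (ζ ^ m * B ((ε:ℂ) * ζ)).re with hRB
  set IB : ℝ → ℝ := fun ε => (ζ ^ m * B ((ε:ℂ) * ζ)).im with hIB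
  set G : ℝ → ℝ := fun ε => ε ^ q1 * IB ε * RA ε ^ 2 - ε ^ q2 * IB ε * (1 + ε ^ n * IA ε) ^ 2
      + 2 * (d' + ε ^ m * RB ε) * (ε ^ q3 * RA ε * (1 + ε ^ n * IA ε)) with hG
  have hG0 : ∀ᶠ ε in nhdsWithin (0:ℝ) (Ioi 0), G ε = 0 := by
    have hmem : Ioo (0:ℝ) (min δ (min r₁ r₂)) ∈ nhdsWithin (0:ℝ) (Ioi 0) :=
      Ioo_mem_nhdsGT_of_mem ⟨le_refl 0, by positivity⟩
    filter_upwards [hmem] with ε hε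
    obtain ⟨hε0, hεlt⟩ := hε
    have hεδ : ε < δ := lt_of_lt_of_le hεlt (min_le_left _ _)
    have hεr₁ : ε < r₁ := lt_of_lt_of_le hεlt ((min_le_right _ _).trans (min_le_left _ _))
    have hεr₂ : ε < r₂ := lt_of_lt_of_le hεlt ((min_le_right _ _).trans (min_le_right _ _))
    set w : ℂ := (ε:ℂ) * ζ with hw
    have hwnorm : ‖w‖ = ε := by
      rw [hw, norm_mul, hζ, Complex.norm_real, Real.norm_eq_abs, _root_.abs_of_pos hε0, mul_one]
    have hwd : dist w 0 < min r₁ r₂ := by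
      rw [dist_zero_right, hwnorm]
      exact lt_min hεr₁ hεr₂
    have hKw : K w = Complex.I + w ^ n * A w := hK' (lt_of_lt_of_le hwd (min_le_left _ _))
    have hHw : H w = (d' : ℂ) + w ^ m * B w := hH' (lt_of_lt_of_le hwd (min_le_right _ _))
    have hid1 := hident w (by rw [hwnorm]; exact hε0) (by rw [hwnorm]; exact hεδ)
    have hwn : w ^ n * A w = ((ε ^ n : ℝ) : ℂ) * (ζ ^ n * A w) := by
      rw [hw]; push_cast; ring
    have hwm : w ^ m * B w = ((ε ^ m : ℝ) : ℂ) * (ζ ^ m * B w) := by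
      rw [hw]; push_cast; ring
    have hre : (K w).re = ε ^ n * RA ε := by
      rw [hKw, hwn, Complex.add_re, Complex.I_re, Complex.re_ofReal_mul, hRA, zero_add]
    have him : (K w).im = 1 + ε ^ n * IA ε := by
      rw [hKw, hwn, Complex.add_im, Complex.I_im, Complex.im_ofReal_mul, hIA]
    have hure : (H w).re = d' + ε ^ m * RB ε := by
      rw [hHw, hwm, Complex.add_re, Complex.ofReal_re, Complex.re_ofReal_mul, hRB]
    have huim : (H w).im = ε ^ m * IB ε := by
      rw [hHw, hwm, Complex.add_im, Complex.ofReal_im, Complex.im_ofReal_mul, hIB, zero_add]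
    rw [hre, him, hure, huim, hwnorm] at hid1
    have e1 : (ε:ℝ) ^ (m + 2 * n) = ε ^ p * ε ^ q1 := by rw [← pow_add, hq1]
    have e2 : (ε:ℝ) ^ (m + 2) = ε ^ p * ε ^ q2 := by rw [← pow_add, hq2]
    have e3 : (ε:ℝ) ^ (n + 1) = ε ^ p * ε ^ q3 := by rw [← pow_add, hq3]
    have hps : ε ^ p * G ε = 0 := by
      have hexp : ε ^ p * G ε =
          ε ^ m * IB ε * ((ε ^ n * RA ε) ^ 2 - ε ^ 2 * (1 + ε ^ n * IA ε) ^ 2)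
            + 2 * (d' + ε ^ m * RB ε) * (ε * (ε ^ n * RA ε) * (1 + ε ^ n * IA ε)) := by
        rw [hG]
        linear_combination (-(IB ε * RA ε ^ 2)) * e1 + (IB ε * (1 + ε ^ n * IA ε) ^ 2) * e2
          - (2 * (d' + ε ^ m * RB ε) * RA ε * (1 + ε ^ n * IA ε)) * e3
      rw [hexp, hid1]
    rcases mul_eq_zero.mp hps with h' | h'
    · exact absurd h' (pow_ne_zero _ hε0.ne')
    · exact h'
  have hc0 : ContinuousAt (fun ε : ℝ => ((ε:ℂ) * ζ)) 0 :=
    (Complex.continuous_ofReal.mul continuous_const).continuousAt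
  have hARc : ContinuousAt (fun ε : ℝ => A ((ε:ℂ) * ζ)) 0 := hA.comp_of_eq hc0 (by simp)
  have hBRc : ContinuousAt (fun ε : ℝ => B ((ε:ℂ) * ζ)) 0 := hB.comp_of_eq hc0 (by simp)
  have hRAc : ContinuousAt RA 0 := (Complex.continuous_re.continuousAt).comp
    ((continuousAt_const.mul hARc) : ContinuousAt (fun ε : ℝ => ζ ^ n * A ((ε:ℂ) * ζ)) 0)
  have hIAc : ContinuousAt IA 0 := (Complex.continuous_im.continuousAt).comp
    ((continuousAt_const.mul hARc) : ContinuousAt (fun ε : ℝ => ζ ^ n * A ((ε:ℂ) * ζ)) 0)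
  have hRBc : ContinuousAt RB 0 := (Complex.continuous_re.continuousAt).comp
    ((continuousAt_const.mul hBRc) : ContinuousAt (fun ε : ℝ => ζ ^ m * B ((ε:ℂ) * ζ)) 0)
  have hIBc : ContinuousAt IB 0 := (Complex.continuous_im.continuousAt).comp
    ((continuousAt_const.mul hBRc) : ContinuousAt (fun ε : ℝ => ζ ^ m * B ((ε:ℂ) * ζ)) 0)
  have hGc : ContinuousAt G 0 := by
    rw [hG]
    exact (((continuousAt_pow _ _ |>.mul hIBc).mul (hRAc.pow 2)).sub
      ((continuousAt_pow _ _ |>.mul hIBc).mul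
        ((continuousAt_const.add ((continuousAt_pow _ _).mul hIAc)).pow 2))).add
      ((continuousAt_const.mul (continuousAt_const.add ((continuousAt_pow _ _).mul hRBc))).mul
        (((continuousAt_pow _ _).mul hRAc).mul
          (continuousAt_const.add ((continuousAt_pow _ _).mul hIAc))))
  have hGlim : Filter.Tendsto G (nhdsWithin (0:ℝ) (Ioi 0)) (nhds (G 0)) :=
    hGc.continuousWithinAt.tendsto
  have hG0val := aux_ray_zero hG0 hGlim
  rw [hG] at hG0val
  simp only [hRA, hIA, hRB, hIB] at hG0val
  rw [show (((0:ℝ):ℂ) * ζ) = 0 by simp] at hG0val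
  rw [zero_pow (by omega : q1 ≠ 0), zero_pow (by omega : n ≠ 0), zero_pow (by omega : m ≠ 0)]
    at hG0val
  ring_nf at hG0val ⊢
  linarith [hG0val]
/-- The key identity (3.12): if `H, K` are holomorphic on a disk of radius `ρ` with
`H(0)` a positive real number and `K(0) = i`, and the identity
`Im H·((Re K)² − |w|²(Im K)²) + 2·Re H·|w|·Re K·Im K = 0` holds on a punctured
neighborhood of `0`, then `Re K = 0` and `Im H = 0` identically near `0`. -/
theorem lines_of_curvature_identity_forces_catenoid
    (H K : ℂ → ℂ) (ρ : ℝ) (hρ : 0 < ρ)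
    (hH : DifferentiableOn ℂ H (ball (0 : ℂ) ρ))
    (hK : DifferentiableOn ℂ K (ball (0 : ℂ) ρ))
    (hH0re : 0 < (H 0).re) (hH0im : (H 0).im = 0) (hK0 : K 0 = Complex.I)
    (hid : ∃ δ > 0, δ ≤ ρ ∧ ∀ w : ℂ, 0 < ‖w‖ → ‖w‖ < δ →
      (H w).im * ((K w).re ^ 2 - ‖w‖ ^ 2 * (K w).im ^ 2) +
        2 * (H w).re * (‖w‖ * (K w).re * (K w).im) = 0) :
    ∃ r > 0, ∀ w : ℂ, ‖w‖ < r → (K w).re = 0 ∧ (H w).im = 0 := by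
  obtain ⟨δ, hδpos, hδρ, hident⟩ := hid
  set d' : ℝ := (H 0).re with hd'
  have hH0eq : H 0 = (d' : ℂ) := by
    apply Complex.ext <;> simp [hd', hH0im]
  have hKa : AnalyticAt ℂ K 0 := hK.analyticAt (ball_mem_nhds 0 hρ)
  have hHa : AnalyticAt ℂ H 0 := hH.analyticAt (ball_mem_nhds 0 hρ)
  have haA : AnalyticAt ℂ (fun w => K w - Complex.I) 0 := hKa.sub analyticAt_const
  have hbA : AnalyticAt ℂ (fun w => H w - (d' : ℂ)) 0 := hHa.sub analyticAt_const
  by_cases hca : ∀ᶠ w in nhds (0:ℂ), K w = Complex.I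
  · obtain ⟨r₁, hr₁, hKc⟩ := Metric.eventually_nhds_iff.mp hca
    refine ⟨min r₁ δ, by positivity, fun w hw => ?_⟩
    have hKw : K w = Complex.I :=
      hKc (by rw [dist_zero_right]; exact lt_of_lt_of_le hw (min_le_left _ _))
    refine ⟨by rw [hKw]; simp, ?_⟩
    by_cases hw0 : w = 0
    · rw [hw0]; exact hH0im
    · have hwn : 0 < ‖w‖ := norm_pos_iff.mpr hw0
      have hide := hident w hwn (lt_of_lt_of_le hw (min_le_right _ _))
      rw [hKw] at hide
      simp only [Complex.I_re, Complex.I_im] at hide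
      have h2 : (0:ℝ) < ‖w‖ ^ 2 := by positivity
      nlinarith [hide]
  · exfalso
    have hord : analyticOrderAt (fun w => K w - Complex.I) 0 ≠ ⊤ := by
      intro hcon
      rw [analyticOrderAt_eq_top] at hcon
      exact hca (hcon.mono fun w hw => by
        have : K w - Complex.I = 0 := hw
        linear_combination this)
    obtain ⟨n, hn⟩ := WithTop.ne_top_iff_exists.mp hord
    obtain ⟨A, hAa, hA0, hAf⟩ := (haA.analyticOrderAt_eq_natCast (n := n)).mp hn.symm
    have hKf : ∀ᶠ w in nhds (0:ℂ), K w = Complex.I + w ^ n * A w := hAf.mono fun w hw => by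
      simp only [sub_zero, smul_eq_mul] at hw
      linear_combination hw
    have hn1 : 1 ≤ n := by
      rcases Nat.eq_zero_or_pos n with h0 | h1
      · exfalso
        have h := hAf.self_of_nhds
        simp only [hK0, sub_self, sub_zero, h0, pow_zero, one_smul] at h
        exact hA0 h.symm
      · exact h1
    have hd'pos : 0 < d' := hH0re
    by_cases hcb : ∀ᶠ w in nhds (0:ℂ), H w = (d' : ℂ)
    · -- H eventually constant: take B = 0, m = n, case n ≤ m
      have hHf : ∀ᶠ w in nhds (0:ℂ), H w = (d':ℂ) + w ^ n * (fun _ : ℂ => (0:ℂ)) w :=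
        hcb.mono fun w hw => by simp [hw]
      have hkey := fun (ζ : ℂ) (hζ : ‖ζ‖ = 1) =>
        aux_key H K A (fun _ => 0) d' n n (n+1) (2*n-1) 1 0 δ hδpos
          hAa.continuousAt continuousAt_const
          (by omega) (by omega) (by omega) (by omega) hn1 hn1
          hKf hHf hident ζ hζ
      have hre0 : ∀ ζ : ℂ, ‖ζ‖ = 1 → (ζ ^ n * A 0).re = 0 := by
        intro ζ hζ
        have h := hkey ζ hζ
        rw [pow_one, pow_zero, zero_mul] at h
        have h' : 2 * d' * (1 * (ζ ^ n * A 0).re) = 0 := h.symm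
        rw [one_mul] at h'
        rcases mul_eq_zero.mp h' with h'' | h''
        · exact absurd h'' (by positivity)
        · exact h''
      exact hA0 (aux_re_all n (by omega) (A 0) hre0)
    · have hbord : analyticOrderAt (fun w => H w - (d' : ℂ)) 0 ≠ ⊤ := by
        intro hcon
        rw [analyticOrderAt_eq_top] at hcon
        exact hcb (hcon.mono fun w hw => by
          have : H w - (d':ℂ) = 0 := hw
          linear_combination this)
      obtain ⟨m, hm⟩ := WithTop.ne_top_iff_exists.mp hbord
      obtain ⟨B, hBa, hB0, hBf⟩ := (hbA.analyticOrderAt_eq_natCast (n := m)).mp hm.symm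
      have hHf : ∀ᶠ w in nhds (0:ℂ), H w = (d':ℂ) + w ^ m * B w := hBf.mono fun w hw => by
        simp only [sub_zero, smul_eq_mul] at hw
        linear_combination hw
      have hm1 : 1 ≤ m := by
        rcases Nat.eq_zero_or_pos m with h0 | h1
        · exfalso
          have h := hBf.self_of_nhds
          simp only [hH0eq, sub_self, sub_zero, h0, pow_zero, one_smul] at h
          exact hB0 h.symm
        · exact h1
      by_cases hcase1 : n ≤ m
      · have hkey := fun (ζ : ℂ) (hζ : ‖ζ‖ = 1) =>
          aux_key H K A B d' n m (n+1) (m+n-1) (m+1-n) 0 δ hδpos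
            hAa.continuousAt hBa.continuousAt
            (by omega) (by omega) (by omega) (by omega) hn1 hm1
            hKf hHf hident ζ hζ
        have hre0 : ∀ ζ : ℂ, ‖ζ‖ = 1 → (ζ ^ n * A 0).re = 0 := by
          intro ζ hζ
          have h := hkey ζ hζ
          rw [zero_pow (by omega : m + 1 - n ≠ 0), zero_mul, pow_zero, one_mul] at h
          rcases mul_eq_zero.mp h.symm with h'' | h''
          · exact absurd h'' (by positivity)
          · exact h''
        exact hA0 (aux_re_all n (by omega) (A 0) hre0)
      · by_cases hcase2 : m + 2 ≤ n
        · have hkey := fun (ζ : ℂ) (hζ : ‖ζ‖ = 1) =>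
            aux_key H K A B d' n m (m+2) (2*n-2) 0 (n-m-1) δ hδpos
              hAa.continuousAt hBa.continuousAt
              (by omega) (by omega) (by omega) (by omega) hn1 hm1
              hKf hHf hident ζ hζ
          have him0 : ∀ ζ : ℂ, ‖ζ‖ = 1 → (ζ ^ m * B 0).im = 0 := by
            intro ζ hζ
            have h := hkey ζ hζ
            rw [pow_zero, one_mul, zero_pow (by omega : n - m - 1 ≠ 0), zero_mul,
              mul_zero] at h
            exact h
          exact hB0 (aux_im_all m (by omega) (B 0) him0)
        · -- n = m + 1
          have hncase : n = m + 1 := by omega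
          have hkey := fun (ζ : ℂ) (hζ : ‖ζ‖ = 1) =>
            aux_key H K A B d' n m (m+2) (2*m) 0 0 δ hδpos
              hAa.continuousAt hBa.continuousAt
              (by omega) (by omega) (by omega) (by omega) hn1 hm1
              hKf hHf hident ζ hζ
          have hkey' : ∀ ζ : ℂ, ‖ζ‖ = 1 → (ζ ^ m * B 0).im = 2 * d' * (ζ ^ n * A 0).re := by
            intro ζ hζ
            have h := hkey ζ hζ
            rwa [pow_zero, one_mul, one_mul] at h
          rcases Nat.even_or_odd m with hev | hod
          · have him0 : ∀ ζ : ℂ, ‖ζ‖ = 1 → (ζ ^ m * B 0).im = 0 := by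
              intro ζ hζ
              have h1 := hkey' ζ hζ
              have h2 := hkey' (-ζ) (by rwa [norm_neg])
              rw [Even.neg_pow hev, hncase, Odd.neg_pow (Even.add_one hev)] at h2
              rw [← hncase] at h2
              rw [neg_mul, Complex.neg_re] at h2
              linarith
            exact hB0 (aux_im_all m (by omega) (B 0) him0)
          · have hre0 : ∀ ζ : ℂ, ‖ζ‖ = 1 → (ζ ^ n * A 0).re = 0 := by
              intro ζ hζ
              have h1 := hkey' ζ hζ
              have h2 := hkey' (-ζ) (by rwa [norm_neg])
              rw [Odd.neg_pow hod, hncase, Even.neg_pow (Odd.add_one hod)] at h2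
              rw [← hncase] at h2
              rw [neg_mul, Complex.neg_im] at h2
              have : 4 * d' * (ζ ^ n * A 0).re = 0 := by linarith
              rcases mul_eq_zero.mp this with h'' | h''
              · exact absurd h'' (by positivity)
              · exact h''
            exact hA0 (aux_re_all n (by omega) (A 0) hre0)
end

section
/- Let f be holomorphic and not identically zero on a domain, with a zero of order m at an interior point p. Then the rotation index I(p) = −(1/4π)·Δ(arg f), where Δ(arg f) is the change in argument of f around a small loop about p, equals −m/2. In particular I(p) ≤ −1/2 at any interior zero. -/
open Metric Set Real

/-- Hopf's rotation-index formula: if `f` is holomorphic with a zero of order `m` at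
an interior point `p`, then the change of argument of `f` around a small loop about
`p` is `2πm`, the rotation index `−(1/4π)·Δ(arg f)` equals `−m/2`, and in particular
it is at most `−1/2` when `m ≥ 1`. -/
theorem rotation_index_at_interior_zero
    (U : Set ℂ) (hU : IsOpen U) (p : ℂ) (hp : p ∈ U)
    (f g : ℂ → ℂ) (m : ℕ) (hm : 1 ≤ m)
    (hg : DifferentiableOn ℂ g U) (hgp : g p ≠ 0)
    (hf : ∀ z ∈ U, f z = (z - p) ^ m * g z) :
    ∃ ε₀ > 0, ∀ ε : ℝ, 0 < ε → ε < ε₀ →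
      (∮ z in C(p, ε), deriv f z / f z) = 2 * π * Complex.I * m ∧
      -(1 / (4 * π)) * (2 * π * (m : ℝ)) = -(m : ℝ) / 2 ∧
      -(m : ℝ) / 2 ≤ -(1 / 2 : ℝ) := by
  have hga : AnalyticOnNhd ℂ g U := hg.analyticOnNhd hU
  -- open set where g ≠ 0
  have hV : IsOpen (U ∩ g ⁻¹' {0}ᶜ) :=
    hg.continuousOn.isOpen_inter_preimage hU isOpen_compl_singleton
  have hpV : p ∈ U ∩ g ⁻¹' {0}ᶜ := ⟨hp, hgp⟩
  obtain ⟨r, hr0, hrV⟩ := Metric.isOpen_iff.1 hV p hpV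
  refine ⟨r, hr0, fun ε hε hεr => ?_⟩
  have hball : Metric.ball p ε ⊆ U ∩ g ⁻¹' {0}ᶜ :=
    (Metric.ball_subset_ball hεr.le).trans hrV
  have hsub : Metric.closedBall p ε ⊆ U ∩ g ⁻¹' {0}ᶜ :=
    (Metric.closedBall_subset_ball hεr).trans hrV
  obtain ⟨n, rfl⟩ : ∃ n, m = n + 1 := ⟨m - 1, (Nat.succ_pred_eq_of_pos hm).symm⟩
  -- pointwise identity on the sphere
  have key : ∀ z ∈ Metric.sphere p ε,
      deriv f z / f z = (n + 1 : ℂ) * (z - p)⁻¹ + deriv g z / g z := by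
    intro z hz
    have hzU : z ∈ U ∩ g ⁻¹' {0}ᶜ := hsub (Metric.sphere_subset_closedBall hz)
    have hzp : z ≠ p := by
      intro h; subst h
      simp only [Metric.mem_sphere, dist_self] at hz
      exact absurd hz.symm hε.ne'
    have hgz : g z ≠ 0 := hzU.2
    have hzp' : z - p ≠ 0 := sub_ne_zero.2 hzp
    have hdg : HasDerivAt g (deriv g z) z :=
      (hg.differentiableAt (hU.mem_nhds hzU.1)).hasDerivAt
    have hpow : HasDerivAt (fun w : ℂ => (w - p) ^ (n + 1))
        ((n + 1 : ℂ) * (z - p) ^ n) z := by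
      have := ((hasDerivAt_pow (n + 1) (z - p)).comp z
        ((hasDerivAt_id z).sub_const p))
      simpa [Function.comp_def] using this
    have hprod : HasDerivAt (fun w => (w - p) ^ (n + 1) * g w)
        ((n + 1 : ℂ) * (z - p) ^ n * g z + (z - p) ^ (n + 1) * deriv g z) z :=
      hpow.mul hdg
    have hfe : f =ᶠ[nhds z] fun w => (w - p) ^ (n + 1) * g w :=
      Filter.eventuallyEq_of_mem (hU.mem_nhds hzU.1) hf
    have hdf : deriv f z = (n + 1 : ℂ) * (z - p) ^ n * g z
        + (z - p) ^ (n + 1) * deriv g z := by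
      rw [Filter.EventuallyEq.deriv_eq hfe, hprod.deriv]
    rw [hdf, hf z hzU.1]
    field_simp
    ring
  rw [circleIntegral.integral_congr hε.le key]
  -- continuity facts on the closed ball
  have hcontg : ContinuousOn g (Metric.closedBall p ε) :=
    hg.continuousOn.mono (hsub.trans (inter_subset_left))
  have hcontdg : ContinuousOn (deriv g) (Metric.closedBall p ε) :=
    (hga.deriv.continuousOn).mono (hsub.trans (inter_subset_left))
  have hgne : ∀ z ∈ Metric.closedBall p ε, g z ≠ 0 := fun z hz => (hsub hz).2
  have hcont_div : ContinuousOn (fun z => deriv g z / g z) (Metric.closedBall p ε) :=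
    hcontdg.div hcontg hgne
  have hI1 : CircleIntegrable (fun z => (n + 1 : ℂ) * (z - p)⁻¹) p ε := by
    apply ContinuousOn.circleIntegrable hε.le
    apply ContinuousOn.mul continuousOn_const
    apply ContinuousOn.inv₀ (by fun_prop)
    intro z hz
    have hzp : z ≠ p := by
      intro h; subst h
      simp only [Metric.mem_sphere, dist_self] at hz
      exact absurd hz.symm hε.ne'
    exact sub_ne_zero.2 hzp
  have hI2 : CircleIntegrable (fun z => deriv g z / g z) p ε :=
    ContinuousOn.circleIntegrable hε.le
      (hcont_div.mono Metric.sphere_subset_closedBall)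
  have hadd : (∮ z in C(p, ε), ((n + 1 : ℂ) * (z - p)⁻¹ + deriv g z / g z))
      = (∮ z in C(p, ε), (n + 1 : ℂ) * (z - p)⁻¹)
        + ∮ z in C(p, ε), deriv g z / g z := by
    have hneg : (∮ z in C(p, ε), -(deriv g z / g z))
        = -∮ z in C(p, ε), deriv g z / g z := by
      simp [circleIntegral, smul_neg, intervalIntegral.integral_neg]
    have := circleIntegral.integral_sub hI1 hI2.neg
    simp only [Pi.neg_apply] at this
    rw [hneg] at this
    simpa [sub_neg_eq_add] using this
  rw [hadd]
  have h1 : (∮ z in C(p, ε), (n + 1 : ℂ) * (z - p)⁻¹)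
      = 2 * π * Complex.I * (n + 1 : ℂ) := by
    rw [circleIntegral.integral_const_mul,
      circleIntegral.integral_sub_inv_of_mem_ball (Metric.mem_ball_self hε)]
    ring
  have h2 : (∮ z in C(p, ε), deriv g z / g z) = 0 := by
    apply Complex.circleIntegral_eq_zero_of_differentiable_on_off_countable hε.le
      countable_empty hcont_div
    intro z hz
    have hzU : z ∈ U ∩ g ⁻¹' {0}ᶜ := hball hz.1
    exact ((hga.deriv z hzU.1).differentiableAt).div
      (hg.differentiableAt (hU.mem_nhds hzU.1)) hzU.2
  rw [h1, h2]
  refine ⟨by push_cast; ring, ?_, ?_⟩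
  · field_simp
    ring
  · have : (1 : ℝ) ≤ (n + 1 : ℕ) := by exact_mod_cast hm
    push_cast at this ⊢
    linarith
end
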